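/- Assume condition (A). If α > 0, p ∈ [1,∞), and u ∈ ℓ^p(V,m) solves (L̃+α)u = 0, then u ≡ 0. -/

import Mathlib

/-- The formal Laplacian `L̃u(x) = (1/m(x)) ∑_y b(x,y)(u(x)-u(y)) + (c(x)/m(x))u(x)`. -/
noncomputable def formalL {V : Type*} (b : V → V → ℝ) (c m : V → ℝ) (u : V → ℝ) (x : V) : ℝ :=
  (1 / m x) * ∑' y, b x y * (u x - u y) + (c x / m x) * u x

lemma exists_larger {V : Type*} (m : V → ℝ) (hm : ∀ x, 0 < m x)
    (b : V → V → ℝ) (c : V → ℝ) (hb_nonneg : ∀ x y, 0 ≤ b x y)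
    (hc : ∀ x, 0 ≤ c x) (α : ℝ) (hα : 0 < α) (v : V → ℝ)
    (hv_eq : ∀ x, formalL b c m v x + α * v x = 0)
    (x : V) (hx : 0 < v x) : ∃ y, 0 < b x y ∧ v x < v y := by
  by_contra h
  push_neg at h
  have hS : 0 ≤ ∑' y, b x y * (v x - v y) := by
    apply tsum_nonneg
    intro y
    rcases eq_or_lt_of_le (hb_nonneg x y) with hb | hb
    · simp [← hb]
    · have := h y hb
      nlinarith
  have heq := hv_eq x
  unfold formalL at heq
  have h1 : 0 < (1:ℝ)/m x := one_div_pos.mpr (hm x)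
  nlinarith [mul_nonneg h1.le hS, mul_nonneg (div_nonneg (hc x) (hm x).le) hx.le,
    mul_pos hα hx]

lemma lp_solution_nonpos
    {V : Type*} [Countable V] (m : V → ℝ) (hm : ∀ x, 0 < m x)
    (b : V → V → ℝ) (c : V → ℝ) (hb_nonneg : ∀ x y, 0 ≤ b x y)
    (hc : ∀ x, 0 ≤ c x)
    (hA : ∀ x : ℕ → V, Function.Injective x → (∀ n, 0 < b (x n) (x (n + 1))) →
      ¬ Summable (fun n => m (x n)))
    (α : ℝ) (hα : 0 < α) (p : ℝ) (hp : 1 ≤ p)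
    (v : V → ℝ)
    (hv_lp : Summable fun x => m x * |v x| ^ p)
    (hv_eq : ∀ x, formalL b c m v x + α * v x = 0) :
    ∀ x, v x ≤ 0 := by
  intro x0
  by_contra hx0
  push_neg at hx0
  have key : ∀ x, 0 < v x → ∃ y, 0 < b x y ∧ v x < v y :=
    exists_larger m hm b c hb_nonneg hc α hα v hv_eq
  classical
  let next : V → V := fun x => if h : 0 < v x then (key x h).choose else x
  let seq : ℕ → V := fun n => next^[n] x0
  have hseq : ∀ n, seq (n+1) = next (seq n) := fun n =>
    Function.iterate_succ_apply' next n x0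
  have step : ∀ x (h : 0 < v x), 0 < b x (next x) ∧ v x < v (next x) := by
    intro x h
    have hspec := (key x h).choose_spec
    simp only [next, dif_pos h]
    exact hspec
  have hpos : ∀ n, 0 < v (seq n) := by
    intro n
    induction n with
    | zero => exact hx0
    | succ k ih =>
      rw [hseq]
      exact lt_trans ih (step _ ih).2
  have hmono : StrictMono (fun n => v (seq n)) := by
    apply strictMono_nat_of_lt_succ
    intro n
    rw [hseq]
    exact (step _ (hpos n)).2
  have hinj : Function.Injective seq := fun a b hab => hmono.injective (by simp [hab])
  have hedge : ∀ n, 0 < b (seq n) (seq (n+1)) := fun n => by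
    rw [hseq]; exact (step _ (hpos n)).1
  refine hA seq hinj hedge ?_
  have hsub : Summable (fun n => m (seq n) * |v (seq n)| ^ p) :=
    hv_lp.comp_injective hinj
  set C : ℝ := |v x0| ^ p with hC
  have hCpos : 0 < C := by
    have : 0 < |v x0| := abs_pos.mpr (ne_of_gt hx0)
    positivity
  refine Summable.of_nonneg_of_le (fun n => (hm _).le) (fun n => ?_)
    ((hsub.div_const C) :
      Summable (fun n => (m (seq n) * |v (seq n)| ^ p) / C))
  · rw [le_div_iff₀ hCpos]
    have hvn : |v x0| ≤ |v (seq n)| := by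
      have h1 : v x0 ≤ v (seq n) := by
        have := hmono.monotone (Nat.zero_le n)
        exact this
      rw [abs_of_pos hx0, abs_of_pos (hpos n)]
      exact h1
    have hrp : C ≤ |v (seq n)| ^ p :=
      Real.rpow_le_rpow (abs_nonneg _) hvn (by linarith)
    nlinarith [(hm (seq n)).le, hrp]

/-- **Uniqueness of solutions on ℓᵖ.** Under condition (A), if `α > 0`,
`p ∈ [1,∞)` and `u ∈ ℓᵖ(V,m)` solves `(L̃+α)u = 0`, then `u ≡ 0`. -/
theorem lp_solution_unique
    (V : Type*) [Countable V] (m : V → ℝ) (hm : ∀ x, 0 < m x)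
    (b : V → V → ℝ) (c : V → ℝ)
    (hb_symm : ∀ x y, b x y = b y x) (hb_nonneg : ∀ x y, 0 ≤ b x y)
    (hb_diag : ∀ x, b x x = 0) (hb_sum : ∀ x, Summable fun y => b x y)
    (hc : ∀ x, 0 ≤ c x)
    -- condition (A)
    (hA : ∀ x : ℕ → V, Function.Injective x → (∀ n, 0 < b (x n) (x (n + 1))) →
      ¬ Summable (fun n => m (x n)))
    (α : ℝ) (hα : 0 < α) (p : ℝ) (hp : 1 ≤ p)
    (u : V → ℝ)
    (hu_lp : Summable fun x => m x * |u x| ^ p)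
    (hu_dom : ∀ x, Summable fun y => b x y * |u y|)
    (hu_eq : ∀ x, formalL b c m u x + α * u x = 0) :
    ∀ x, u x = 0 := by
  have h1 : ∀ x, u x ≤ 0 :=
    lp_solution_nonpos m hm b c hb_nonneg hc hA α hα p hp u hu_lp hu_eq
  have hneg_eq : ∀ x, formalL b c m (fun y => -u y) x + α * (-u x) = 0 := by
    intro x
    have hfl : formalL b c m (fun y => -u y) x = - formalL b c m u x := by
      unfold formalL
      have hterm : ∀ y, b x y * (-u x - -u y) = -(b x y * (u x - u y)) := by
        intro y; ring
      simp only [hterm]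
      rw [tsum_neg]
      ring
    rw [hfl]
    have := hu_eq x
    linarith
  have h2 : ∀ x, -u x ≤ 0 := by
    apply lp_solution_nonpos m hm b c hb_nonneg hc hA α hα p hp (fun y => -u y)
    · simpa [abs_neg] using hu_lp
    · exact hneg_eq
  intro x
  have := h1 x
  have := h2 x
  linarith
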